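/- Let D be a squarefree integer, u a positive integer, and let S be the set of numbers r + s√D with r, s nonzero integers, gcd(r, sD) = 1 and u | s. Let p be an odd prime and suppose t is the least positive integer such that p^t or -p^t is the norm of an element of S. If p^n or -p^n is also the norm of an element of S for a positive integer n, then t divides n. -/

import Mathlib

/-- `±p^k` is expressible as the norm of an element `r + s√D` with `r, s ≠ 0`,
`gcd(r, sD) = 1` and `u ∣ s`. -/
def NormExpr (D : ℤ) (u : ℕ) (p k : ℕ) : Prop :=
  ∃ r s : ℤ, r ≠ 0 ∧ s ≠ 0 ∧ Int.gcd r (s * D) = 1 ∧ (u : ℤ) ∣ s ∧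
    (r ^ 2 - D * s ^ 2 = (p : ℤ) ^ k ∨ r ^ 2 - D * s ^ 2 = -((p : ℤ) ^ k))

private lemma norm_sign {D : ℤ} {p k : ℕ} {a b : ℤ}
    (h : a ^ 2 - D * b ^ 2 = (p : ℤ) ^ k ∨ a ^ 2 - D * b ^ 2 = -((p : ℤ) ^ k)) :
    ∃ e : ℤ, (e = 1 ∨ e = -1) ∧ a ^ 2 - D * b ^ 2 = e * (p : ℤ) ^ k := by
  rcases h with h | h
  · exact ⟨1, Or.inl rfl, by linarith⟩
  · exact ⟨-1, Or.inr rfl, by linarith⟩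

private lemma not_dvd_facts {D : ℤ} {p k : ℕ} (hp : p.Prime) (hk : 0 < k)
    {a b e : ℤ} (hg : Int.gcd a (b * D) = 1)
    (hnorm : a ^ 2 - D * b ^ 2 = e * (p : ℤ) ^ k) :
    ¬ (p : ℤ) ∣ D ∧ ¬ (p : ℤ) ∣ a ∧ ¬ (p : ℤ) ∣ b := by
  set P : ℤ := (p : ℤ) with hPdef
  have hP : Prime P := Nat.prime_iff_prime_int.mp hp
  have hPk : P ∣ e * P ^ k := Dvd.dvd.mul_left (dvd_pow_self P hk.ne') e
  have hgc : P ∣ a → P ∣ b * D → False := by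
    intro h1 h2
    have h3 := Int.dvd_coe_gcd h1 h2
    rw [hg] at h3
    exact hP.not_isUnit (isUnit_of_dvd_one (by simpa only [Nat.cast_one] using h3))
  have ha2 : a ^ 2 = e * P ^ k + D * b ^ 2 := by linarith
  have hpD : ¬ P ∣ D := by
    intro h
    have h1 : P ∣ a ^ 2 := by rw [ha2]; exact dvd_add hPk ((h.mul_right (b ^ 2)))
    exact hgc (hP.dvd_of_dvd_pow h1) (h.mul_left b)
  refine ⟨hpD, ?_, ?_⟩
  · intro h
    have h1 : P ∣ D * b ^ 2 := by
      have : D * b ^ 2 = a ^ 2 - e * P ^ k := by linarith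
      rw [this]
      exact dvd_sub (dvd_pow h two_ne_zero) hPk
    rcases hP.dvd_mul.mp h1 with h2 | h2
    · exact hpD h2
    · exact hgc h ((hP.dvd_of_dvd_pow h2).mul_right D)
  · intro h
    have h1 : P ∣ a ^ 2 := by
      rw [ha2]
      exact dvd_add hPk ((dvd_pow h two_ne_zero).mul_left D)
    exact hgc (hP.dvd_of_dvd_pow h1) (h.mul_right D)

private lemma descent (D : ℤ) (u : ℕ) (p : ℕ) (hp : p.Prime) (hodd : Odd p)
    (t n : ℕ) (ht : 0 < t) (hlt : t < n)
    (htex : NormExpr D u p t) (hnex : NormExpr D u p n) : NormExpr D u p (n - t) := by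
  obtain ⟨a, b, ha0, hb0, hgab, hub, hna⟩ := hnex
  obtain ⟨c, d, hc0, hd0, hgc', hud, htc⟩ := htex
  obtain ⟨e1, he1, hNa⟩ := norm_sign hna
  obtain ⟨e2, he2, hNc⟩ := norm_sign htc
  set P : ℤ := (p : ℤ) with hPdef
  have hP : Prime P := Nat.prime_iff_prime_int.mp hp
  obtain ⟨hpD, hpa, hpb⟩ := not_dvd_facts hp (ht.trans hlt) hgab hNa
  obtain ⟨-, hpc, hpd⟩ := not_dvd_facts hp ht hgc' hNc
  have hE : e1 * e2 = 1 ∨ e1 * e2 = -1 := by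
    rcases he1 with rfl | rfl <;> rcases he2 with rfl | rfl <;> norm_num
  have hEu : IsUnit (e1 * e2) := by
    rcases hE with h | h <;> rw [h]
    · exact isUnit_one
    · exact isUnit_one.neg
  -- P^t divides (ad-bc)(ad+bc)
  have key : P ^ t ∣ (a * d - b * c) * (a * d + b * c) := by
    have h1 : (a * d - b * c) * (a * d + b * c)
        = d ^ 2 * (a ^ 2 - D * b ^ 2) - b ^ 2 * (c ^ 2 - D * d ^ 2) := by ring
    rw [h1, hNa, hNc]
    exact dvd_sub (((pow_dvd_pow P hlt.le).mul_left e1).mul_left (d ^ 2))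
      ((dvd_rfl.mul_left e2).mul_left (b ^ 2))
  have hnotboth : ¬ (P ∣ (a * d - b * c) ∧ P ∣ (a * d + b * c)) := by
    rintro ⟨h1, h2⟩
    have h3 : P ∣ 2 * (a * d) := by
      have heq : 2 * (a * d) = (a * d - b * c) + (a * d + b * c) := by ring
      rw [heq]; exact dvd_add h1 h2
    rcases hP.dvd_mul.mp h3 with h | h
    · have h4' : (p : ℤ) ∣ (2 : ℤ) := h
      have h4 : p ∣ 2 := by exact_mod_cast h4'
      have h5 := (Nat.prime_dvd_prime_iff_eq hp Nat.prime_two).mp h4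
      obtain ⟨m, hm⟩ := hodd; omega
    · rcases hP.dvd_mul.mp h with h | h
      exacts [hpa h, hpd h]
  have hcases : P ^ t ∣ (a * d - b * c) ∨ P ^ t ∣ (a * d + b * c) := by
    by_cases h1 : P ∣ (a * d + b * c)
    · have h2 : ¬ P ∣ (a * d - b * c) := fun h => hnotboth ⟨h, h1⟩
      have h3 : IsCoprime (P ^ t) (a * d - b * c) :=
        ((hP.coprime_iff_not_dvd).mpr h2).pow_left
      exact Or.inr (h3.dvd_of_dvd_mul_left key)
    · have h3 : IsCoprime (P ^ t) (a * d + b * c) :=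
        ((hP.coprime_iff_not_dvd).mpr h1).pow_left
      exact Or.inl (h3.dvd_of_dvd_mul_left (by rwa [mul_comm] at key))
  -- pick e = ±d so that P^t ∣ a*e + b*c
  obtain ⟨e, he0, hue, hpe, hCe, hBdvd⟩ :
      ∃ e : ℤ, e ≠ 0 ∧ (u : ℤ) ∣ e ∧ ¬ P ∣ e ∧ c ^ 2 - D * e ^ 2 = e2 * P ^ t ∧
        P ^ t ∣ (a * e + b * c) := by
    rcases hcases with h | h
    · refine ⟨-d, neg_ne_zero.mpr hd0, hud.neg_right, fun hh => hpd (dvd_neg.mp hh),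
        by linear_combination hNc, ?_⟩
      have heq : a * (-d) + b * c = -(a * d - b * c) := by ring
      rw [heq]; exact dvd_neg.mpr h
    · exact ⟨d, hd0, hud, hpd, hNc, h⟩
  set A : ℤ := a * c + b * e * D with hAdef
  set B : ℤ := a * e + b * c with hBdef
  have hBdvd' : P ^ t ∣ B := hBdvd
  have hnormAB : A ^ 2 - D * B ^ 2 = (e1 * e2) * P ^ (n + t) := by
    have h1 : A ^ 2 - D * B ^ 2 = (a ^ 2 - D * b ^ 2) * (c ^ 2 - D * e ^ 2) := by
      rw [hAdef, hBdef]; ring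
    rw [h1, hNa, hCe, pow_add]; ring
  have hAdvd : P ^ t ∣ A := by
    have hA2 : A ^ 2 = (e1 * e2) * P ^ (n + t) + D * B ^ 2 := by linarith
    have hp2 : (P ^ t) ^ 2 ∣ (e1 * e2) * P ^ (n + t) := by
      rw [← pow_mul]
      exact (pow_dvd_pow P (by omega)).mul_left _
    have hb2 : (P ^ t) ^ 2 ∣ D * B ^ 2 := (pow_dvd_pow_of_dvd hBdvd' 2).mul_left D
    have h2 : (P ^ t) ^ 2 ∣ A ^ 2 := by rw [hA2]; exact dvd_add hp2 hb2
    exact (IsIntegrallyClosed.pow_dvd_pow_iff two_ne_zero).mp h2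
  obtain ⟨A', hA'⟩ := hAdvd
  obtain ⟨B', hB'⟩ := hBdvd'
  have hPt0 : (P : ℤ) ^ t ≠ 0 := pow_ne_zero _ hP.ne_zero
  have hnorm' : A' ^ 2 - D * B' ^ 2 = (e1 * e2) * P ^ (n - t) := by
    have key2 : P ^ (2 * t) * (A' ^ 2 - D * B' ^ 2) = (e1 * e2) * P ^ (n + t) := by
      rw [← hnormAB, hA', hB']; ring
    have key3 : P ^ (2 * t) * ((e1 * e2) * P ^ (n - t)) = (e1 * e2) * P ^ (n + t) := by
      rw [mul_left_comm, ← pow_add]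
      congr 2
      omega
    exact mul_left_cancel₀ (pow_ne_zero _ hP.ne_zero) (key2.trans key3.symm)
  have hnotboth' : ¬ (P ∣ A' ∧ P ∣ B') := by
    rintro ⟨h1, h2⟩
    have hA1 : P ^ (t + 1) ∣ A := by rw [hA', pow_succ]; exact mul_dvd_mul_left _ h1
    have hB1 : P ^ (t + 1) ∣ B := by rw [hB', pow_succ]; exact mul_dvd_mul_left _ h2
    have hca : c * A - D * e * B = a * (e2 * P ^ t) := by
      rw [hAdef, hBdef, ← hCe]; ring
    have h4 : P ^ (t + 1) ∣ a * (e2 * P ^ t) := by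
      rw [← hca]; exact dvd_sub (hA1.mul_left c) (hB1.mul_left (D * e))
    have h5 : P * P ^ t ∣ (a * e2) * P ^ t := by
      have heq : (a * e2) * P ^ t = a * (e2 * P ^ t) := by ring
      rw [heq, ← pow_succ']
      exact h4
    have h6 : P ∣ a * e2 := (mul_dvd_mul_iff_right hPt0).mp h5
    rcases hP.dvd_mul.mp h6 with h | h
    · exact hpa h
    · rcases he2 with rfl | rfl
      · exact hP.not_unit (isUnit_of_dvd_one h)
      · exact hP.not_unit (isUnit_of_dvd_unit h isUnit_one.neg)
  have hB'0 : B' ≠ 0 := by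
    rintro rfl
    have h1 : A' ^ 2 = (e1 * e2) * P ^ (n - t) := by linarith [hnorm']
    have h2 : P ∣ A' ^ 2 := by
      rw [h1]; exact (dvd_pow_self P (by omega : n - t ≠ 0)).mul_left _
    exact hnotboth' ⟨hP.dvd_of_dvd_pow h2, dvd_zero P⟩
  have hA'0 : A' ≠ 0 := by
    rintro rfl
    have h1 : D * B' ^ 2 = -((e1 * e2) * P ^ (n - t)) := by linarith [hnorm']
    have h2 : P ∣ D * B' ^ 2 := by
      rw [h1]
      exact ((dvd_pow_self P (by omega : n - t ≠ 0)).mul_left _).neg_right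
    rcases hP.dvd_mul.mp h2 with h | h
    · exact hpD h
    · exact hnotboth' ⟨dvd_zero P, hP.dvd_of_dvd_pow h⟩
  have hgcd' : Int.gcd A' (B' * D) = 1 := by
    by_contra hne
    obtain ⟨q, hq, hqd⟩ := Nat.exists_prime_and_dvd hne
    have hq1 : (q : ℤ) ∣ A' := (Int.natCast_dvd_natCast.mpr hqd).trans (Int.gcd_dvd_left _ _)
    have hq2 : (q : ℤ) ∣ B' * D := (Int.natCast_dvd_natCast.mpr hqd).trans (Int.gcd_dvd_right _ _)
    have hqP : Prime (q : ℤ) := Nat.prime_iff_prime_int.mp hq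
    have hq3 : (q : ℤ) ∣ (e1 * e2) * P ^ (n - t) := by
      rw [← hnorm']
      refine dvd_sub (dvd_pow hq1 two_ne_zero) ?_
      have heq : D * B' ^ 2 = (B' * D) * B' := by ring
      rw [heq]; exact hq2.mul_right B'
    have hq4 : (q : ℤ) ∣ P ^ (n - t) := by
      rcases hqP.dvd_mul.mp hq3 with h | h
      · exact absurd (isUnit_of_dvd_unit h hEu) hqP.not_isUnit
      · exact h
    have hq5 : (q : ℤ) ∣ P := hqP.dvd_of_dvd_pow hq4
    have hq6 : q = p := (Nat.prime_dvd_prime_iff_eq hq hp).mp (Int.natCast_dvd_natCast.mp hq5)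
    subst hq6
    rcases hP.dvd_mul.mp hq2 with h | h
    · exact hnotboth' ⟨hq1, h⟩
    · exact hpD h
  have hpu : ¬ P ∣ (u : ℤ) := fun h => hpb (h.trans hub)
  have huB : (u : ℤ) ∣ B := by
    rw [hBdef]
    exact dvd_add (hue.mul_left a) (hub.mul_right c)
  have huB' : (u : ℤ) ∣ B' := by
    have hco : IsCoprime ((u : ℤ)) (P ^ t) :=
      (((hP.coprime_iff_not_dvd).mpr hpu).symm).pow_right
    rw [hB'] at huB
    exact hco.dvd_of_dvd_mul_left huB
  refine ⟨A', B', hA'0, hB'0, hgcd', huB', ?_⟩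
  rcases hE with h | h
  · left; rw [hnorm', h, one_mul]
  · right; rw [hnorm', h]; ring

theorem least_norm_exponent_divides (D : ℤ) (hD : Squarefree D) (u : ℕ) (hu : 0 < u)
    (p : ℕ) (hp : p.Prime) (hodd : Odd p) (t n : ℕ) (ht : 0 < t)
    (htex : NormExpr D u p t) (hleast : ∀ m : ℕ, 0 < m → NormExpr D u p m → t ≤ m)
    (hn : 0 < n) (hnex : NormExpr D u p n) : t ∣ n := by
  induction n using Nat.strong_induction_on with
  | _ n ih =>
    have hle := hleast n hn hnex
    rcases eq_or_lt_of_le hle with heq | hlt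
    · exact heq ▸ dvd_refl t
    · have hdesc := descent D u p hp hodd t n ht hlt htex hnex
      have h2 := ih (n - t) (by omega) (by omega) hdesc
      have h3 : t ∣ (n - t) + t := dvd_add h2 dvd_rfl
      rwa [Nat.sub_add_cancel hle] at h3
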